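/- Fix m ≥ 2, a prime p, and k ≥ 1 with k ≤ v_p(m). Then the number of pairs (a,b) of units modulo m such that e^{2πi(a−b)/m} has order exactly p^k equals φ(p^k)·φ(m) if v_p(m) > k, and equals φ(p^k)·φ(m)·(p−2)/(p−1) if v_p(m) = k. If v_p(m) < k the count is 0. -/

import Mathlib

open Finset

private lemma addOrderOf_zmod' (n : ℕ) [NeZero n] (c : ZMod n) :
    addOrderOf c = n / n.gcd c.val := by
  conv_lhs => rw [← ZMod.natCast_zmod_val c]
  exact ZMod.addOrderOf_coe _ (NeZero.ne n)

private lemma ord_exp' (m : ℕ) (hm : m ≠ 0) (a b : (ZMod m)ˣ) :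
    orderOf (Complex.exp (2 * Real.pi * Complex.I *
      ((((a : ZMod m).val : ℂ) - ((b : ZMod m).val : ℂ)) / m))) =
    addOrderOf ((a : ZMod m) - (b : ZMod m)) := by
  haveI : NeZero m := ⟨hm⟩
  set x := (a : ZMod m).val with hx
  set y := (b : ZMod m).val with hy
  set c := (a : ZMod m) - (b : ZMod m) with hc
  set n := c.val with hn
  have hcn : ((n : ℕ) : ZMod m) = c := ZMod.natCast_zmod_val c
  have hdvd : (m : ℤ) ∣ ((x : ℤ) - y - n) := by
    have : (((x : ℤ) - y - n : ℤ) : ZMod m) = 0 := by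
      push_cast
      rw [ZMod.natCast_zmod_val, ZMod.natCast_zmod_val, hcn, hc]
      ring
    exact (ZMod.intCast_zmod_eq_zero_iff_dvd _ _).mp this
  obtain ⟨j, hj⟩ := hdvd
  have hexp : Complex.exp (2 * Real.pi * Complex.I * (((x : ℂ) - y) / m)) =
      Complex.exp (2 * Real.pi * Complex.I * ((n : ℂ) / m)) := by
    rw [Complex.exp_eq_exp_iff_exists_int]
    refine ⟨j, ?_⟩
    have hm' : (m : ℂ) ≠ 0 := Nat.cast_ne_zero.mpr hm
    have hj' : (x : ℂ) - y - n = m * j := by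
      have := congrArg (fun t : ℤ => (t : ℂ)) hj
      push_cast at this
      exact_mod_cast this
    rw [show ((x : ℂ) - y) / m = n / m + j by
      rw [div_add' _ _ _ hm', div_left_inj' hm']; linear_combination hj']
    ring
  rw [hexp]
  have h2 : Complex.exp (2 * Real.pi * Complex.I * ((n : ℂ) / m)) =
      (Complex.exp (2 * Real.pi * Complex.I / m)) ^ n := by
    rw [← Complex.exp_nat_mul]
    ring_nf
  rw [h2]
  have hprim := Complex.isPrimitiveRoot_exp m hm
  have hord : orderOf (Complex.exp (2 * Real.pi * Complex.I / m)) = m :=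
    (hprim.eq_orderOf).symm
  rcases Nat.eq_zero_or_pos n with h0 | hpos
  · have hczero : c = 0 := by rw [← hcn, h0]; simp
    rw [h0, pow_zero, hczero, orderOf_one, addOrderOf_zero]
  · rw [orderOf_pow' _ (Nat.pos_iff_ne_zero.mp hpos)]
    rw [hord, ← hcn, ZMod.addOrderOf_coe _ hm]

private lemma key_sub' (m : ℕ) [NeZero m] (u b : (ZMod m)ˣ) :
    addOrderOf (((u * b : (ZMod m)ˣ) : ZMod m) - (b : ZMod m)) =
      addOrderOf ((u : ZMod m) - 1) := by
  have hinj : Function.Injective (⇑(AddMonoidHom.mulRight (b : ZMod m))) := by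
    intro z w h
    simp only [AddMonoidHom.mulRight_apply] at h
    have := congrArg (fun t => t * ((b⁻¹ : (ZMod m)ˣ) : ZMod m)) h
    simpa [mul_assoc, ← Units.val_mul] using this
  have h := addOrderOf_injective (AddMonoidHom.mulRight (b : ZMod m)) hinj ((u : ZMod m) - 1)
  simp only [AddMonoidHom.mulRight_apply, sub_mul, one_mul, ← Units.val_mul] at h
  exact h

private lemma count_pairs' (m : ℕ) [NeZero m] (d : ℕ) :
    Nat.card {ab : (ZMod m)ˣ × (ZMod m)ˣ //
        addOrderOf ((ab.1 : ZMod m) - (ab.2 : ZMod m)) = d}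
      = m.totient * Nat.card {u : (ZMod m)ˣ // addOrderOf ((u : ZMod m) - 1) = d} := by
  have E : {ab : (ZMod m)ˣ × (ZMod m)ˣ //
        addOrderOf ((ab.1 : ZMod m) - (ab.2 : ZMod m)) = d}
      ≃ (ZMod m)ˣ × {u : (ZMod m)ˣ // addOrderOf ((u : ZMod m) - 1) = d} :=
    { toFun := fun s => (s.1.2, ⟨s.1.1 * s.1.2⁻¹, by
        have h := key_sub' m (s.1.1 * s.1.2⁻¹) s.1.2
        rw [inv_mul_cancel_right] at h
        rw [← h]; exact s.2⟩)
      invFun := fun t => ⟨(t.2.1 * t.1, t.1), by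
        have h := key_sub' m t.2.1 t.1
        rw [h]; exact t.2.2⟩
      left_inv := fun s => by
        ext <;> simp [mul_inv_cancel_right, inv_mul_cancel_right]
      right_inv := fun t => by
        ext <;> simp [mul_inv_cancel_right, inv_mul_cancel_right] }
  rw [Nat.card_congr E, Nat.card_prod, Nat.card_eq_fintype_card, ZMod.card_units_eq_totient]

private lemma count_crt' (a b : ℕ) [NeZero a] [NeZero b] (hab : a.Coprime b) (d : ℕ)
    (hdb : d.Coprime b) :
    Nat.card {u : (ZMod (a*b))ˣ // addOrderOf ((u : ZMod (a*b)) - 1) = d}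
      = Nat.card {u : (ZMod a)ˣ // addOrderOf ((u : ZMod a) - 1) = d} := by
  have f := ZMod.chineseRemainder hab
  let g : (ZMod (a*b))ˣ ≃* (ZMod a)ˣ × (ZMod b)ˣ :=
    (Units.mapEquiv f.toMulEquiv).trans MulEquiv.prodUnits
  have hfval : ∀ u : (ZMod (a*b))ˣ,
      f ((u : ZMod (a*b))) = (((g u).1 : ZMod a), ((g u).2 : ZMod b)) := by
    intro u; rfl
  have hdvdb : ∀ y : ZMod b, addOrderOf y ∣ b := by
    intro y
    rw [addOrderOf_dvd_iff_nsmul_eq_zero]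
    have : (b : ZMod b) = 0 := ZMod.natCast_self b
    rw [nsmul_eq_mul, this, zero_mul]
  have hP : ∀ u : (ZMod (a*b))ˣ,
      addOrderOf ((u : ZMod (a*b)) - 1) = d ↔
        (addOrderOf (((g u).1 : ZMod a) - 1) = d ∧ (g u).2 = 1) := by
    intro u
    have h1 : addOrderOf ((u : ZMod (a*b)) - 1)
        = addOrderOf (f ((u : ZMod (a*b)) - 1)) :=
      (addOrderOf_injective f.toAddMonoidHom f.injective _).symm
    have h2 : f ((u : ZMod (a*b)) - 1)
        = ((((g u).1 : ZMod a) - 1), (((g u).2 : ZMod b) - 1)) := by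
      rw [map_sub, map_one, hfval u]; rfl
    rw [h1, h2, Prod.addOrderOf]
    constructor
    · intro h
      have hy : addOrderOf (((g u).2 : ZMod b) - 1) = 1 := by
        have hdvd1 : addOrderOf (((g u).2 : ZMod b) - 1) ∣ d := h ▸ Nat.dvd_lcm_right _ _
        have hdvd2 := hdvdb (((g u).2 : ZMod b) - 1)
        exact Nat.eq_one_of_dvd_coprimes hdb hdvd1 hdvd2
      have hy' : (g u).2 = 1 := by
        have h0 : ((g u).2 : ZMod b) - 1 = 0 := AddMonoid.addOrderOf_eq_one_iff.mp hy
        have : ((g u).2 : ZMod b) = ((1 : (ZMod b)ˣ) : ZMod b) := by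
          rw [Units.val_one]; linear_combination h0
        exact Units.ext this
      refine ⟨?_, hy'⟩
      rw [hy, Nat.lcm_one_right] at h
      exact h
    · rintro ⟨h1', h2'⟩
      rw [h1', h2']
      simp [Nat.lcm_one_right]
  have E2 : {p : (ZMod a)ˣ × (ZMod b)ˣ //
        addOrderOf ((p.1 : ZMod a) - 1) = d ∧ p.2 = 1}
      ≃ {x : (ZMod a)ˣ // addOrderOf ((x : ZMod a) - 1) = d} :=
    { toFun := fun s => ⟨s.1.1, s.2.1⟩
      invFun := fun x => ⟨(x.1, 1), ⟨x.2, rfl⟩⟩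
      left_inv := fun s => by
        obtain ⟨⟨x, y⟩, hx, hy⟩ := s
        exact Subtype.ext (Prod.ext rfl hy.symm)
      right_inv := fun x => rfl }
  rw [Nat.card_congr (((g.toEquiv.subtypeEquiv hP)).trans E2)]

private lemma card_addOrderOf_eq_totient' (n d : ℕ) [NeZero n] (hd : d ∣ n) :
    Nat.card {c : ZMod n // addOrderOf c = d} = d.totient := by
  classical
  have E : {c : ZMod n // addOrderOf c = d}
      ≃ {x : Multiplicative (ZMod n) // orderOf x = d} :=
    Equiv.subtypeEquiv (Multiplicative.ofAdd) (by
      intro c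
      rw [orderOf_ofAdd_eq_addOrderOf])
  rw [Nat.card_congr E, Nat.card_eq_fintype_card, Fintype.card_subtype]
  have hcard : Fintype.card (Multiplicative (ZMod n)) = n := by
    simp [ZMod.card]
  exact IsCyclic.card_orderOf_eq_totient (by rw [hcard]; exact hd)

private lemma count_lt' (p e k : ℕ) (hp : p.Prime) (hk : 1 ≤ k) (hke : k < e) :
    Nat.card {u : (ZMod (p^e))ˣ // addOrderOf ((u : ZMod (p^e)) - 1) = p^k}
      = (p^k).totient := by
  have hne : p^e ≠ 0 := pow_ne_zero _ hp.pos.ne'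
  haveI : NeZero (p^e) := ⟨hne⟩
  have hunit : ∀ c : ZMod (p^e), addOrderOf c = p^k → IsUnit (c + 1) := by
    intro c hc
    rw [addOrderOf_zmod'] at hc
    set g := (p^e).gcd c.val with hg
    have hgdvd : g ∣ p^e := Nat.gcd_dvd_left _ _
    have hmul : g * p^k = p^e := by
      rw [← hc]; exact Nat.mul_div_cancel' hgdvd
    have hpg : p ∣ g := by
      rcases (Nat.dvd_prime_pow hp).mp hgdvd with ⟨j, hj, hgj⟩
      have hjpos : 0 < j := by
        rcases Nat.eq_zero_or_pos j with h0 | h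
        · exfalso
          rw [h0, pow_zero] at hgj
          rw [hgj, one_mul] at hmul
          exact absurd (Nat.pow_right_injective hp.two_le hmul) (by omega)
        · exact h
      rw [hgj]
      exact dvd_pow_self p hjpos.ne'
    have hpc : p ∣ c.val := hpg.trans (Nat.gcd_dvd_right _ _)
    have hcop : Nat.Coprime (c.val + 1) (p^e) := by
      apply Nat.Coprime.pow_right
      rw [Nat.coprime_comm, hp.coprime_iff_not_dvd]
      intro hdvd
      have h1 : p ∣ 1 := by simpa using Nat.dvd_sub hdvd hpc
      exact hp.one_lt.ne' (Nat.dvd_one.mp h1)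
    have : IsUnit (((c.val + 1 : ℕ) : ZMod (p^e))) :=
      (ZMod.isUnit_iff_coprime _ _).mpr hcop
    simpa [ZMod.natCast_zmod_val] using this
  have E : {u : (ZMod (p^e))ˣ // addOrderOf ((u : ZMod (p^e)) - 1) = p^k}
      ≃ {c : ZMod (p^e) // addOrderOf c = p^k} :=
    { toFun := fun s => ⟨(s.1 : ZMod (p^e)) - 1, s.2⟩
      invFun := fun t => ⟨(hunit t.1 t.2).unit, by
        rw [IsUnit.unit_spec]
        simpa using t.2⟩
      left_inv := fun s => by
        apply Subtype.ext
        apply Units.ext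
        rw [IsUnit.unit_spec]
        ring
      right_inv := fun t => by
        apply Subtype.ext
        simp [IsUnit.unit_spec] }
  rw [Nat.card_congr E]
  exact card_addOrderOf_eq_totient' _ _ (pow_dvd_pow p hke.le)

private lemma filter_range_p_card' (p : ℕ) (hp : p.Prime) :
    ((range p).filter (fun r => r ≠ 0 ∧ r ≠ p-1)).card = p - 2 := by
  have hset : (range p).filter (fun r => r ≠ 0 ∧ r ≠ p-1)
      = (range p) \ ({0, p-1} : Finset ℕ) := by
    ext r
    simp only [mem_filter, mem_sdiff, mem_range, mem_insert, mem_singleton]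
    tauto
  rw [hset, card_sdiff_of_subset]
  · rw [card_range]
    have h2 : ({0, p-1} : Finset ℕ).card = 2 := by
      rw [card_insert_of_notMem (by simp; have := hp.two_le; omega), card_singleton]
    omega
  · intro x hx
    simp only [mem_insert, mem_singleton] at hx
    have := hp.two_le
    rcases hx with h | h <;> simp [mem_range] <;> omega

private lemma nat_count' (p e : ℕ) (hp : p.Prime) (he : 1 ≤ e) :
    ((range (p^e)).filter (fun n => ¬ p ∣ n ∧ ¬ p ∣ (n+1))).card
      = p^(e-1) * (p - 2) := by
  have hpe : p^(e-1) * p = p^e := by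
    rw [← pow_succ]
    congr 1
    omega
  rw [← filter_range_p_card' p hp, ← card_range (p^(e-1)), ← card_product]
  apply card_bij' (fun n _ => ((n / p : ℕ), (n % p : ℕ)))
      (fun q _ => q.1 * p + q.2)
  · intro n hn
    simp only [mem_filter, mem_range] at hn
    obtain ⟨hlt, h1, h2⟩ := hn
    simp only [mem_product, mem_range, mem_filter]
    refine ⟨(Nat.div_lt_iff_lt_mul hp.pos).mpr (by rw [hpe]; exact hlt),
      Nat.mod_lt _ hp.pos, ?_, ?_⟩
    · intro h0
      exact h1 (Nat.dvd_of_mod_eq_zero h0)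
    · intro hmod
      apply h2
      have hdm := Nat.div_add_mod n p
      have : n + 1 = p * (n / p + 1) := by
        have h2le := hp.two_le
        have hexp : p * (n / p + 1) = p * (n / p) + p := by ring
        omega
      exact ⟨n / p + 1, this⟩
  · intro q hq
    simp only [mem_product, mem_range, mem_filter] at hq
    obtain ⟨hq1, hq2, hr0, hr1⟩ := hq
    simp only [mem_filter, mem_range]
    refine ⟨?_, ?_, ?_⟩
    · calc q.1 * p + q.2 < (q.1 + 1) * p := by nlinarith
        _ ≤ p^(e-1) * p := Nat.mul_le_mul_right _ (by omega)
        _ = p^e := hpe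
    · intro hdvd
      have : p ∣ q.2 := (Nat.dvd_add_right (Dvd.intro_left _ rfl)).mp hdvd
      exact hr0 (Nat.eq_zero_of_dvd_of_lt this hq2 |> fun h => h) |>.elim
    · intro hdvd
      have hd2 : p ∣ q.2 + 1 := by
        have : q.1 * p + q.2 + 1 = q.1 * p + (q.2 + 1) := by ring
        rw [this] at hdvd
        exact (Nat.dvd_add_right (Dvd.intro_left _ rfl)).mp hdvd
      have hle : q.2 + 1 ≤ p := hq2
      have := Nat.le_of_dvd (by omega) hd2
      have heq : q.2 + 1 = p := le_antisymm hle this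
      exact hr1 (by omega)
  · intro n hn
    show n / p * p + n % p = n
    rw [mul_comm]
    exact Nat.div_add_mod n p
  · intro q hq
    simp only [mem_product, mem_range, mem_filter] at hq
    have h1 : (q.1 * p + q.2) / p = q.1 := by
      rw [mul_comm, Nat.mul_add_div hp.pos, Nat.div_eq_of_lt hq.2.1]
      omega
    have h2 : (q.1 * p + q.2) % p = q.2 := by
      rw [mul_comm, Nat.mul_add_mod, Nat.mod_eq_of_lt hq.2.1]
    rw [h1, h2]

private lemma isUnit_natCast_iff' (p e n : ℕ) (hp : p.Prime) (he : 1 ≤ e) :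
    IsUnit ((n : ℕ) : ZMod (p^e)) ↔ ¬ p ∣ n := by
  rw [ZMod.isUnit_iff_coprime, Nat.coprime_pow_right_iff (by omega),
    Nat.coprime_comm]
  exact hp.coprime_iff_not_dvd

private lemma ord_full_iff' (p e : ℕ) (hp : p.Prime) (he : 1 ≤ e) (c : ZMod (p^e)) :
    haveI : NeZero (p^e) := ⟨pow_ne_zero _ hp.pos.ne'⟩
    addOrderOf c = p^e ↔ IsUnit c := by
  haveI : NeZero (p^e) := ⟨pow_ne_zero _ hp.pos.ne'⟩
  rw [addOrderOf_zmod']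
  have hne : p^e ≠ 0 := pow_ne_zero _ hp.pos.ne'
  rw [Nat.div_eq_self]
  constructor
  · rintro (h | h)
    · exact absurd h hne
    · have h' : IsUnit ((c.val : ℕ) : ZMod (p^e)) :=
        (ZMod.isUnit_iff_coprime _ _).mpr (by
          unfold Nat.Coprime
          rw [Nat.gcd_comm]
          exact h)
      simpa [ZMod.natCast_zmod_val] using h'
  · intro h
    right
    rw [Nat.gcd_comm]
    have h' : IsUnit ((c.val : ℕ) : ZMod (p^e)) := by
      rw [ZMod.natCast_zmod_val]
      exact h
    exact (ZMod.isUnit_iff_coprime _ _).mp h'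

private lemma count_eq' (p e : ℕ) (hp : p.Prime) (he : 1 ≤ e) :
    haveI : NeZero (p^e) := ⟨pow_ne_zero _ hp.pos.ne'⟩
    Nat.card {u : (ZMod (p^e))ˣ // addOrderOf ((u : ZMod (p^e)) - 1) = p^e}
      = (p - 2) * p^(e-1) := by
  have hnat := nat_count' p e hp he
  haveI : NeZero (p^e) := ⟨pow_ne_zero _ hp.pos.ne'⟩
  have E1 : {u : (ZMod (p^e))ˣ // addOrderOf ((u : ZMod (p^e)) - 1) = p^e}
      ≃ {c : ZMod (p^e) // IsUnit c ∧ IsUnit (c + 1)} :=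
    { toFun := fun s => ⟨(s.1 : ZMod (p^e)) - 1,
        (ord_full_iff' p e hp he _).mp s.2, by
          simpa using s.1.isUnit⟩
      invFun := fun t => ⟨t.2.2.unit, by
        rw [IsUnit.unit_spec]
        have : t.1 + 1 - 1 = t.1 := by ring
        rw [this]
        exact (ord_full_iff' p e hp he _).mpr t.2.1⟩
      left_inv := fun s => by
        apply Subtype.ext
        apply Units.ext
        rw [IsUnit.unit_spec]
        ring
      right_inv := fun t => by
        apply Subtype.ext
        simp }
  have E2 : {c : ZMod (p^e) // IsUnit c ∧ IsUnit (c + 1)}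
      ≃ {n : ℕ // n ∈ (range (p^e)).filter (fun n => ¬ p ∣ n ∧ ¬ p ∣ (n+1))} :=
    { toFun := fun c => ⟨(c.1).val, by
        have h1 := c.2.1
        have h2 := c.2.2
        rw [← ZMod.natCast_zmod_val c.1] at h1
        have h2' : IsUnit (((c.1.val + 1 : ℕ)) : ZMod (p^e)) := by
          push_cast [ZMod.natCast_zmod_val]
          exact h2
        simp only [Finset.mem_filter, Finset.mem_range]
        exact ⟨ZMod.val_lt c.1, (isUnit_natCast_iff' p e _ hp he).mp h1,
          (isUnit_natCast_iff' p e _ hp he).mp h2'⟩⟩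
      invFun := fun n => ⟨((n.1 : ℕ) : ZMod (p^e)), by
        have mem := n.2
        simp only [Finset.mem_filter, Finset.mem_range] at mem
        refine ⟨(isUnit_natCast_iff' p e _ hp he).mpr mem.2.1, ?_⟩
        have : ((n.1 : ℕ) : ZMod (p^e)) + 1 = (((n.1 + 1 : ℕ)) : ZMod (p^e)) := by
          push_cast; ring
        rw [this]
        exact (isUnit_natCast_iff' p e _ hp he).mpr mem.2.2⟩
      left_inv := fun c => Subtype.ext (ZMod.natCast_zmod_val c.1)
      right_inv := fun n => Subtype.ext
        (ZMod.val_cast_of_lt (Finset.mem_range.mp (Finset.mem_filter.mp n.2).1)) }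
  rw [Nat.card_congr (E1.trans E2), Nat.card_eq_fintype_card]
  rw [Fintype.card_coe]
  rw [hnat, mul_comm]

private lemma main_count' (m p k : ℕ) (hm : 2 ≤ m) (hp : p.Prime) (hk : 1 ≤ k)
    (hke : k ≤ padicValNat p m) :
    haveI : NeZero m := ⟨by omega⟩
    Nat.card {u : (ZMod m)ˣ // addOrderOf ((u : ZMod m) - 1) = p^k}
      = if k < padicValNat p m then (p^k).totient else (p - 2) * p^(k-1) := by
  haveI : NeZero m := ⟨by omega⟩
  obtain ⟨e, hedef⟩ : ∃ e, padicValNat p m = e := ⟨_, rfl⟩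
  rw [hedef] at hke ⊢
  have hfact : m.factorization p = e := by rw [← hedef]; exact Nat.factorization_def m hp
  have he1 : 1 ≤ e := le_trans hk hke
  obtain ⟨b, hb1, hb2, hb3⟩ : ∃ b, m = p^e * b ∧ (p^e).Coprime b ∧ ¬ p ∣ b := by
    refine ⟨m / p ^ e, ?_, ?_, ?_⟩
    · rw [← hfact]
      exact (Nat.ordProj_mul_ordCompl_eq_self m p).symm
    · rw [← hfact]
      exact Nat.Coprime.pow_left _ (Nat.coprime_ordCompl hp (by omega))
    · rw [← hfact]
      exact Nat.not_dvd_ordCompl hp (by omega)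
  haveI : NeZero (p^e) := ⟨pow_ne_zero _ hp.pos.ne'⟩
  haveI : NeZero b := ⟨by rintro rfl; rw [mul_zero] at hb1; omega⟩
  have hdb : (p^k).Coprime b :=
    Nat.Coprime.pow_left _ ((hp.coprime_iff_not_dvd).mpr hb3)
  have hcount : Nat.card {u : (ZMod m)ˣ // addOrderOf ((u : ZMod m) - 1) = p^k}
      = Nat.card {u : (ZMod (p^e))ˣ // addOrderOf ((u : ZMod (p^e)) - 1) = p^k} := by
    rw [hb1]  -- does this work? m appears in types
    exact count_crt' (p^e) b hb2 (p^k) hdb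
  rw [hcount]
  rcases lt_or_eq_of_le hke with hlt | heq
  · rw [if_pos hlt]
    exact count_lt' p e k hp hk hlt
  · rw [if_neg (by omega)]
    have : k = e := heq
    subst this
    exact count_eq' p k hp hk

theorem card_pairs_order_prime_pow (m p k : ℕ) (hm : 2 ≤ m) (hp : p.Prime) (hk : 1 ≤ k) :
    (k < padicValNat p m →
      Nat.card {ab : (ZMod m)ˣ × (ZMod m)ˣ //
          orderOf (Complex.exp (2 * Real.pi * Complex.I *
            ((((ab.1 : ZMod m).val : ℂ) - ((ab.2 : ZMod m).val : ℂ)) / m))) = p ^ k}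
        = Nat.totient (p ^ k) * Nat.totient m) ∧
    (padicValNat p m = k →
      Nat.card {ab : (ZMod m)ˣ × (ZMod m)ˣ //
          orderOf (Complex.exp (2 * Real.pi * Complex.I *
            ((((ab.1 : ZMod m).val : ℂ) - ((ab.2 : ZMod m).val : ℂ)) / m))) = p ^ k}
        = (p - 2) * p ^ (k - 1) * Nat.totient m) ∧
    (padicValNat p m < k →
      Nat.card {ab : (ZMod m)ˣ × (ZMod m)ˣ //
          orderOf (Complex.exp (2 * Real.pi * Complex.I *
            ((((ab.1 : ZMod m).val : ℂ) - ((ab.2 : ZMod m).val : ℂ)) / m))) = p ^ k}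
        = 0) := by
  have hm0 : m ≠ 0 := by omega
  haveI : NeZero m := ⟨hm0⟩
  have hE : ∀ d : ℕ, {ab : (ZMod m)ˣ × (ZMod m)ˣ //
      orderOf (Complex.exp (2 * Real.pi * Complex.I *
        ((((ab.1 : ZMod m).val : ℂ) - ((ab.2 : ZMod m).val : ℂ)) / m))) = d}
      ≃ {ab : (ZMod m)ˣ × (ZMod m)ˣ //
        addOrderOf ((ab.1 : ZMod m) - (ab.2 : ZMod m)) = d} := by
    intro d
    apply Equiv.subtypeEquivRight
    intro ab
    rw [ord_exp' m hm0 ab.1 ab.2]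
  refine ⟨?_, ?_, ?_⟩
  · intro hlt
    rw [Nat.card_congr (hE (p^k)), count_pairs' m (p^k)]
    have := main_count' m p k hm hp hk hlt.le
    rw [if_pos hlt] at this
    rw [this, mul_comm]
  · intro heq
    rw [Nat.card_congr (hE (p^k)), count_pairs' m (p^k)]
    have := main_count' m p k hm hp hk heq.ge
    rw [if_neg (by omega)] at this
    rw [this]
    ring
  · intro hlt
    rw [Nat.card_congr (hE (p^k))]
    have hempty : IsEmpty {ab : (ZMod m)ˣ × (ZMod m)ˣ //
        addOrderOf ((ab.1 : ZMod m) - (ab.2 : ZMod m)) = p^k} := by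
      constructor
      rintro ⟨ab, hab⟩
      have hdvd : addOrderOf ((ab.1 : ZMod m) - (ab.2 : ZMod m)) ∣ m := by
        rw [addOrderOf_dvd_iff_nsmul_eq_zero, nsmul_eq_mul, ZMod.natCast_self, zero_mul]
      rw [hab] at hdvd
      have := (Nat.Prime.pow_dvd_iff_le_factorization hp hm0).mp hdvd
      rw [Nat.factorization_def m hp] at this
      omega
    rw [Nat.card_eq_zero]
    left
    exact hempty
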